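/- For any triangle abc with angle ∠bac = φ, the ratio |bc| / (|ab| + |ac|) is at least sin(φ/2). -/
import Mathlib


open EuclideanGeometry

/-- For any (nondegenerate) triangle `a b c` with angle `φ = ∠ b a c` at vertex `a`,
the ratio `|bc| / (|ab| + |ac|)` is at least `sin (φ/2)`. -/
theorem stmt0 (a b c : EuclideanSpace ℝ (Fin 2))
    (hnd : AffineIndependent ℝ ![a, b, c]) (φ : ℝ) (hφ : φ = ∠ b a c) :
    dist b c / (dist a b + dist a c) ≥ Real.sin (φ / 2) := by
  have hab : a ≠ b := by
    intro h
    have : (0 : Fin 3) = 1 := hnd.injective (by simp [h])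
    simp at this
  have hac : a ≠ c := by
    intro h
    have : (0 : Fin 3) = 2 := hnd.injective (by simp [h])
    simp at this
  have hx : (0:ℝ) < dist a b := dist_pos.2 hab
  have hy : (0:ℝ) < dist a c := dist_pos.2 hac
  have hlc := law_cos b a c
  rw [← hφ, dist_comm b a, dist_comm c a] at hlc
  have hcos : Real.cos φ = 1 - 2 * Real.sin (φ / 2) ^ 2 := by
    have h2 : φ = 2 * (φ / 2) := by ring
    rw [h2, Real.cos_two_mul, Real.cos_sq']
    ring
  have hcosb : -1 ≤ Real.cos φ := Real.neg_one_le_cos φ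
  have hsin : 0 ≤ Real.sin (φ / 2) := by
    rw [hφ]
    apply Real.sin_nonneg_of_nonneg_of_le_pi
    · linarith [angle_nonneg b a c]
    · linarith [angle_le_pi b a c, Real.pi_pos]
  have hsin1 : Real.sin (φ / 2) ≤ 1 := Real.sin_le_one _
  rw [ge_iff_le, le_div_iff₀ (by linarith)]
  nlinarith [dist_nonneg (x := b) (y := c), sq_nonneg (dist a b - dist a c)]
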